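/- Let ℓ ≥ 1, γ ∈ (0,1), let T ∈ ℝ^{ℓ×ℓ} be a row-stochastic matrix (all entries nonnegative, each row summing to 1) that is irreducible (for every pair of indices (i,j) there exists n ≥ 1 with (T^n)_{ij} > 0), and let ϖ ∈ ℝ^ℓ satisfy 0 < ϖ_k ≤ 1 for all k. Set Π = diag(ϖ) and H = Π^{1/2}(I − γT). Then H is invertible and the symmetric positive definite matrix HᵀH has smallest eigenvalue λ_min(HᵀH) satisfying 0 < λ_min(HᵀH) ≤ (1 − γ)². -/

import Mathlib

open Matrix
open Finset

theorem aux_inj (ℓ : ℕ) (γ : ℝ) (hγ : γ ∈ Set.Ioo (0:ℝ) 1)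
    (T : Matrix (Fin ℓ) (Fin ℓ) ℝ) (hTnonneg : ∀ i j, 0 ≤ T i j)
    (hTrow : ∀ i, ∑ j, T i j = 1) (x : Fin ℓ → ℝ)
    (hx : ((1 : Matrix (Fin ℓ) (Fin ℓ) ℝ) - γ • T) *ᵥ x = 0) : x = 0 := by
  rw [sub_mulVec, one_mulVec, smul_mulVec, sub_eq_zero] at hx
  have hfix : ∀ i, x i = γ * ∑ j, T i j * x j := fun i => congrFun hx i
  by_cases h0 : ℓ = 0
  · subst h0; ext i; exact absurd i.2 (by omega)
  have : Nonempty (Fin ℓ) := ⟨⟨0, Nat.pos_of_ne_zero h0⟩⟩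
  obtain ⟨i, -, hi⟩ := Finset.exists_max_image Finset.univ (fun i => |x i|)
    ⟨Classical.arbitrary _, mem_univ _⟩
  have hbound : |x i| ≤ γ * |x i| := by
    calc |x i| = γ * |∑ j, T i j * x j| := by
          rw [hfix i, abs_mul, abs_of_pos hγ.1]
      _ ≤ γ * ∑ j, T i j * |x i| := by
          refine mul_le_mul_of_nonneg_left ?_ hγ.1.le
          refine (Finset.abs_sum_le_sum_abs _ _).trans (Finset.sum_le_sum fun j _ => ?_)
          rw [abs_mul, abs_of_nonneg (hTnonneg i j)]
          exact mul_le_mul_of_nonneg_left (hi j (mem_univ j)) (hTnonneg i j)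
      _ = γ * |x i| := by rw [← Finset.sum_mul, hTrow, one_mul]
  have hxi : |x i| ≤ 0 := by
    by_contra h
    push_neg at h
    have := mul_lt_mul_of_pos_right hγ.2 h
    rw [one_mul] at this
    linarith
  ext j
  have := (hi j (mem_univ j)).trans hxi
  simpa using le_antisymm this (abs_nonneg _)

theorem aux_rayleigh {n : ℕ} {M : Matrix (Fin n) (Fin n) ℝ} (hM : M.IsHermitian) (c : ℝ)
    (h : ∀ i, c ≤ hM.eigenvalues i) (x : Fin n → ℝ) :
    c * (x ⬝ᵥ x) ≤ x ⬝ᵥ (M *ᵥ x) := by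
  set U : Matrix (Fin n) (Fin n) ℝ := (hM.eigenvectorUnitary : Matrix (Fin n) (Fin n) ℝ)
  have hUU : U * star U = 1 := (Matrix.mem_unitaryGroup_iff).mp hM.eigenvectorUnitary.2
  have key : M - c • 1 = U * (Matrix.diagonal (fun i => hM.eigenvalues i - c)) * star U := by
    have h1 : (c • (1 : Matrix (Fin n) (Fin n) ℝ)) = U * (c • 1) * star U := by
      rw [Matrix.mul_smul, Matrix.smul_mul, mul_one, hUU]
    conv_lhs => rw [hM.spectral_theorem, h1]
    rw [Unitary.conjStarAlgAut_apply]
    change U * _ * star U - U * c • 1 * star U = _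
    rw [← Matrix.sub_mul, ← Matrix.mul_sub]
    congr 2
    ext i j
    by_cases hij : i = j <;>
      simp [Matrix.diagonal_apply, Matrix.one_apply, hij]
  have hps : (M - c • 1).PosSemidef := by
    rw [key]
    exact (Matrix.posSemidef_diagonal_iff.mpr fun i =>
      sub_nonneg.mpr (h i)).mul_mul_conjTranspose_same U
  have h2 := hps.dotProduct_mulVec_nonneg x
  simp only [star_trivial, sub_mulVec, dotProduct_sub, smul_mulVec, one_mulVec,
    dotProduct_smul, smul_eq_mul] at h2
  linarith


/-- `Hᵀ H` is Hermitian (over `ℝ`: symmetric). -/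
theorem transpose_mul_self_isHermitian (ℓ : ℕ) (H : Matrix (Fin ℓ) (Fin ℓ) ℝ) :
    (Hᵀ * H).IsHermitian := by
  simpa [Matrix.conjTranspose_eq_transpose_of_trivial] using
    Matrix.isHermitian_conjTranspose_mul_self H

/-- Let `ℓ ≥ 1`, `γ ∈ (0,1)`, `T` a row-stochastic irreducible
`ℓ×ℓ` matrix, and `ϖ` with `0 < ϖ_k ≤ 1`.  Set `Π = diag(ϖ)` and
`H = Π^{1/2}(I − γT)`.  Then `H` is invertible and the symmetric positive definite
matrix `HᵀH` has smallest eigenvalue in `(0, (1−γ)²]`: all its eigenvalues are positive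
and some eigenvalue is `≤ (1−γ)²`. -/
theorem stmt_18 (ℓ : ℕ) (hℓ : 1 ≤ ℓ) (γ : ℝ) (hγ : γ ∈ Set.Ioo (0 : ℝ) 1)
    (T : Matrix (Fin ℓ) (Fin ℓ) ℝ)
    (hTnonneg : ∀ i j, 0 ≤ T i j)
    (hTrow : ∀ i, ∑ j, T i j = 1)
    (hTirr : ∀ i j, ∃ n : ℕ, 1 ≤ n ∧ 0 < (T ^ n) i j)
    (ϖ : Fin ℓ → ℝ) (hϖ : ∀ k, 0 < ϖ k ∧ ϖ k ≤ 1) :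
    IsUnit (Matrix.diagonal (fun k => Real.sqrt (ϖ k))
        * ((1 : Matrix (Fin ℓ) (Fin ℓ) ℝ) - γ • T)) ∧
    ((Matrix.diagonal (fun k => Real.sqrt (ϖ k))
        * ((1 : Matrix (Fin ℓ) (Fin ℓ) ℝ) - γ • T))ᵀ
      * (Matrix.diagonal (fun k => Real.sqrt (ϖ k))
        * ((1 : Matrix (Fin ℓ) (Fin ℓ) ℝ) - γ • T))).PosDef ∧
    (∀ i : Fin ℓ, 0 < (transpose_mul_self_isHermitian ℓ
        (Matrix.diagonal (fun k => Real.sqrt (ϖ k))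
          * ((1 : Matrix (Fin ℓ) (Fin ℓ) ℝ) - γ • T))).eigenvalues i) ∧
    (∃ i : Fin ℓ, (transpose_mul_self_isHermitian ℓ
        (Matrix.diagonal (fun k => Real.sqrt (ϖ k))
          * ((1 : Matrix (Fin ℓ) (Fin ℓ) ℝ) - γ • T))).eigenvalues i ≤ (1 - γ) ^ 2) := by
  set D : Matrix (Fin ℓ) (Fin ℓ) ℝ := Matrix.diagonal (fun k => Real.sqrt (ϖ k)) with hD
  set B : Matrix (Fin ℓ) (Fin ℓ) ℝ := (1 : Matrix (Fin ℓ) (Fin ℓ) ℝ) - γ • T with hB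
  set H : Matrix (Fin ℓ) (Fin ℓ) ℝ := D * B with hH
  have hsq : ∀ k, 0 < Real.sqrt (ϖ k) := fun k => Real.sqrt_pos.mpr (hϖ k).1
  have hinj : ∀ x : Fin ℓ → ℝ, H *ᵥ x = 0 → x = 0 := by
    intro x hx
    rw [hH, ← mulVec_mulVec] at hx
    have hBx : B *ᵥ x = 0 := by
      funext k
      have := congrFun hx k
      rw [hD, mulVec_diagonal] at this
      simpa using (mul_eq_zero.mp this).resolve_left (hsq k).ne'
    exact aux_inj ℓ γ hγ T hTnonneg hTrow x hBx
  have hUnit : IsUnit H := by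
    rw [Matrix.isUnit_iff_isUnit_det, isUnit_iff_ne_zero]
    intro hdet
    obtain ⟨v, hv0, hv⟩ := (Matrix.exists_mulVec_eq_zero_iff).mpr hdet
    exact hv0 (hinj v hv)
  have hPD : (Hᵀ * H).PosDef := by
    refine Matrix.PosDef.of_dotProduct_mulVec_pos (transpose_mul_self_isHermitian ℓ H) fun x hx => ?_
    have hy : H *ᵥ x ≠ 0 := fun h => hx (hinj x h)
    rw [star_trivial, ← mulVec_mulVec, dotProduct_mulVec, vecMul_transpose]
    obtain ⟨k, hk⟩ := Function.ne_iff.mp hy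
    refine Finset.sum_pos' (fun i _ => mul_self_nonneg _) ⟨k, mem_univ k, ?_⟩
    exact mul_self_pos.mpr (by simpa using hk)
  refine ⟨hUnit, hPD, fun i => hPD.eigenvalues_pos i, ?_⟩
  -- last part
  by_contra hcon
  push_neg at hcon
  have : Nonempty (Fin ℓ) := ⟨⟨0, hℓ⟩⟩
  set hM := transpose_mul_self_isHermitian ℓ H with hMdef
  obtain ⟨i₀, -, hi₀⟩ := Finset.exists_min_image Finset.univ hM.eigenvalues
    ⟨Classical.arbitrary _, mem_univ _⟩
  set x : Fin ℓ → ℝ := fun _ => 1 with hxdef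
  have hHx : H *ᵥ x = fun k => Real.sqrt (ϖ k) * (1 - γ) := by
    rw [hH, ← mulVec_mulVec]
    have hBx : B *ᵥ x = fun _ => 1 - γ := by
      funext i
      rw [hB, sub_mulVec, one_mulVec, smul_mulVec]
      simp [mulVec, dotProduct, hxdef, hTrow i]
    rw [hBx]
    funext k
    rw [hD, mulVec_diagonal]
  have hquad : x ⬝ᵥ ((Hᵀ * H) *ᵥ x) = (1 - γ) ^ 2 * ∑ k, ϖ k := by
    rw [← mulVec_mulVec, dotProduct_mulVec, vecMul_transpose, hHx]
    simp only [dotProduct]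
    rw [Finset.mul_sum]
    refine Finset.sum_congr rfl fun k _ => ?_
    conv_rhs => rw [← Real.sq_sqrt (hϖ k).1.le]
    ring
  have hxx : x ⬝ᵥ x = (ℓ : ℝ) := by simp [hxdef, dotProduct]
  have hray := aux_rayleigh hM (hM.eigenvalues i₀) (fun i => hi₀ i (mem_univ i)) x
  rw [hxx, hquad] at hray
  have hsum : ∑ k, ϖ k ≤ (ℓ : ℝ) := by
    calc ∑ k, ϖ k ≤ ∑ _k : Fin ℓ, (1:ℝ) := Finset.sum_le_sum fun k _ => (hϖ k).2
      _ = (ℓ : ℝ) := by simp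
  have hlt : (1 - γ) ^ 2 < hM.eigenvalues i₀ := hcon i₀
  have hℓpos : (0:ℝ) < (ℓ : ℝ) := by exact_mod_cast hℓ
  nlinarith [sq_nonneg (1 - γ)]
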